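/- Let n, k ∈ ℕ with k ≥ 2. If there exists an (n−k)-regular bipartite false twin-free graph G on 2n vertices with γ_t(G) = 6 and γ_gr^t(G) = 6, then there exists an orthogonal array OA(k, k − 1). -/

import Mathlib

/-- `S` is a total dominating set of `G`: every vertex has a neighbor in `S`. -/
def IsTotalDomSet {V : Type*} (G : SimpleGraph V) (S : Set V) : Prop :=
  ∀ v : V, ∃ u ∈ S, G.Adj v u

/-- `l` is a legal sequence of `G`: the vertices are distinct and every vertex
(except possibly the first) totally dominates a vertex not totally dominated
by the previous vertices. -/
def IsLegalSeq {V : Type*} (G : SimpleGraph V) (l : List V) : Prop :=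
  l.Nodup ∧ ∀ i : Fin l.length, 0 < (i : ℕ) →
    ∃ w : V, G.Adj (l.get i) w ∧ ∀ j : Fin l.length, (j : ℕ) < (i : ℕ) → ¬ G.Adj (l.get j) w

/-- `l` is a total dominating sequence of `G`. -/
def IsTotalDomSeq {V : Type*} (G : SimpleGraph V) (l : List V) : Prop :=
  IsLegalSeq G l ∧ IsTotalDomSet G {v | v ∈ l}

/-- The Grundy total domination number of `G`: the maximum length of a total
dominating sequence. -/
noncomputable def grundyTotalDomNum {V : Type*} (G : SimpleGraph V) : ℕ :=
  sSup {k : ℕ | ∃ l : List V, IsTotalDomSeq G l ∧ l.length = k}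

/-- The total domination number of `G`: the minimum cardinality of a total
dominating set. -/
noncomputable def totalDomNum {V : Type*} (G : SimpleGraph V) : ℕ :=
  sInf {k : ℕ | ∃ S : Set V, IsTotalDomSet G S ∧ S.ncard = k}

/-- `A`, `B` is a bipartition of `G`. -/
def IsBipartitionOf {V : Type*} (G : SimpleGraph V) (A B : Set V) : Prop :=
  (∀ v : V, (v ∈ A ∧ v ∉ B) ∨ (v ∈ B ∧ v ∉ A)) ∧
  ∀ ⦃u v : V⦄, G.Adj u v → (u ∈ A ∧ v ∈ B) ∨ (u ∈ B ∧ v ∈ A)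

/-- `G` has no false twins: distinct vertices have distinct open neighborhoods. -/
def FalseTwinFree {V : Type*} (G : SimpleGraph V) : Prop :=
  ∀ u v : V, u ≠ v → G.neighborSet u ≠ G.neighborSet v

/-- `G` has no isolated vertices. -/
def NoIsolatedVerts {V : Type*} (G : SimpleGraph V) : Prop :=
  ∀ v : V, ∃ u : V, G.Adj v u

/-- An orthogonal array `OA(s, q)`: a `q² × s` array with entries from `Fin q`
such that within any two distinct columns, every ordered pair of symbols
occurs in exactly one row. -/
def IsOrthogonalArray {s q : ℕ} (A : Fin (q ^ 2) → Fin s → Fin q) : Prop :=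
  ∀ j₁ j₂ : Fin s, j₁ ≠ j₂ → ∀ x y : Fin q, ∃! r : Fin (q ^ 2), A r j₁ = x ∧ A r j₂ = y

lemma isLegalSeq_iff {V : Type*} (G : SimpleGraph V) (l : List V) :
    IsLegalSeq G l ↔ l.Nodup ∧ ∀ i : ℕ, (hi : i < l.length) → 0 < i →
      ∃ w : V, G.Adj l[i] w ∧ ∀ j : ℕ, (hj : j < l.length) → j < i → ¬ G.Adj l[j] w := by
  constructor
  · rintro ⟨h1, h2⟩
    refine ⟨h1, fun i hi hpos => ?_⟩
    obtain ⟨w, hw1, hw2⟩ := h2 ⟨i, hi⟩ hpos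
    exact ⟨w, hw1, fun j hj hji => hw2 ⟨j, hj⟩ hji⟩
  · rintro ⟨h1, h2⟩
    refine ⟨h1, fun i hpos => ?_⟩
    obtain ⟨w, hw1, hw2⟩ := h2 i i.isLt hpos
    exact ⟨w, hw1, fun j hji => hw2 j j.isLt hji⟩

lemma isLegalSeq_concat {V : Type*} {G : SimpleGraph V} {l : List V} {u w : V}
    (hl : IsLegalSeq G l) (hu : u ∉ l) (hadj : G.Adj u w)
    (hnew : ∀ x ∈ l, ¬ G.Adj x w) : IsLegalSeq G (l ++ [u]) := by
  rw [isLegalSeq_iff] at hl ⊢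
  obtain ⟨h1, h2⟩ := hl
  constructor
  · simpa [List.nodup_append] using ⟨h1, fun a ha hau => hu (hau ▸ ha)⟩
  · intro i hi hpos
    rcases lt_or_ge i l.length with hil | hil
    · obtain ⟨v, hv1, hv2⟩ := h2 i hil hpos
      refine ⟨v, by rwa [List.getElem_append_left hil], fun j hj hji => ?_⟩
      have hjl : j < l.length := lt_trans hji hil
      rw [List.getElem_append_left hjl]
      exact hv2 j hjl hji
    · have hieq : i = l.length := by
        simp only [List.length_append, List.length_singleton] at hi; omega
      have : (l ++ [u])[i] = u := by
        rw [List.getElem_append_right hil]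
        simp [hieq]
      refine ⟨w, by rwa [this], fun j hj hji => ?_⟩
      have hjl : j < l.length := by omega
      rw [List.getElem_append_left hjl]
      exact hnew _ (l.getElem_mem hjl)

lemma legal_greedy {V : Type*} [Fintype V] (G : SimpleGraph V) (P T : Set V)
    (l0 : List V) (h0 : IsLegalSeq G l0) (h0P : ∀ x ∈ l0, x ∈ P)
    (hPT : ∀ v ∈ T, ∃ u ∈ P, G.Adj v u) :
    ∃ l : List V, IsLegalSeq G l ∧ (∀ x ∈ l, x ∈ P) ∧
      (∀ v ∈ T, ∃ u ∈ l, G.Adj v u) ∧ l0.length ≤ l.length := by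
  have key : ∀ m : ℕ, ∀ l0 : List V, Fintype.card V ≤ l0.length + m →
      IsLegalSeq G l0 → (∀ x ∈ l0, x ∈ P) →
      ∃ l : List V, IsLegalSeq G l ∧ (∀ x ∈ l, x ∈ P) ∧
        (∀ v ∈ T, ∃ u ∈ l, G.Adj v u) ∧ l0.length ≤ l.length := by
    intro m
    induction m with
    | zero =>
      intro l0 hm h0 h0P
      by_cases hcov : ∀ v ∈ T, ∃ u ∈ l0, G.Adj v u
      · exact ⟨l0, h0, h0P, hcov, le_refl _⟩
      · push_neg at hcov
        obtain ⟨v, hvT, hvunc⟩ := hcov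
        obtain ⟨u, huP, hadj⟩ := hPT v hvT
        have hu : u ∉ l0 := fun hmem => hvunc u hmem hadj
        have hnew : ∀ x ∈ l0, ¬ G.Adj x v := fun x hx hax => hvunc x hx hax.symm
        have hleg := isLegalSeq_concat h0 hu hadj.symm hnew
        have := hleg.1.length_le_card
        simp at this
        omega
    | succ m ih =>
      intro l0 hm h0 h0P
      by_cases hcov : ∀ v ∈ T, ∃ u ∈ l0, G.Adj v u
      · exact ⟨l0, h0, h0P, hcov, le_refl _⟩
      · push_neg at hcov
        obtain ⟨v, hvT, hvunc⟩ := hcov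
        obtain ⟨u, huP, hadj⟩ := hPT v hvT
        have hu : u ∉ l0 := fun hmem => hvunc u hmem hadj
        have hnew : ∀ x ∈ l0, ¬ G.Adj x v := fun x hx hax => hvunc x hx hax.symm
        have hleg := isLegalSeq_concat h0 hu hadj.symm hnew
        have h1P : ∀ x ∈ l0 ++ [u], x ∈ P := by
          intro x hx
          rcases List.mem_append.mp hx with hx | hx
          · exact h0P x hx
          · simp at hx; subst hx; exact huP
        obtain ⟨l, hl1, hl2, hl3, hl4⟩ := ih (l0 ++ [u]) (by simp; omega) hleg h1P
        refine ⟨l, hl1, hl2, hl3, ?_⟩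
        simp at hl4; omega
  exact key (Fintype.card V) l0 (by omega) h0 h0P

lemma isLegalSeq_take {V : Type*} {G : SimpleGraph V} {l : List V} (m : ℕ)
    (hl : IsLegalSeq G l) : IsLegalSeq G (l.take m) := by
  rw [isLegalSeq_iff] at hl ⊢
  obtain ⟨h1, h2⟩ := hl
  refine ⟨h1.sublist (List.take_sublist m l), fun i hi hpos => ?_⟩
  have hi' : i < l.length := by simp at hi; omega
  obtain ⟨w, hw1, hw2⟩ := h2 i hi' hpos
  rw [List.getElem_take]
  refine ⟨w, hw1, fun j hj hji => ?_⟩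
  rw [List.getElem_take]
  exact hw2 j (by omega) hji

lemma isLegalSeq_append {V : Type*} {G : SimpleGraph V} {A B : Set V}
    (hbip : IsBipartitionOf G A B) {la lb : List V}
    (hla : IsLegalSeq G la) (hlb : IsLegalSeq G lb)
    (haA : ∀ x ∈ la, x ∈ A) (hbB : ∀ x ∈ lb, x ∈ B)
    (hne : ∀ x ∈ lb, ∃ w, G.Adj x w) : IsLegalSeq G (la ++ lb) := by
  have hAnotB : ∀ u ∈ A, u ∉ B := by
    intro u hu
    rcases hbip.1 u with ⟨_, h⟩ | ⟨_, h⟩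
    · exact h
    · exact absurd hu h
  have hAA : ∀ u w : V, u ∈ A → w ∈ A → ¬ G.Adj u w := by
    intro u w hu hw hadj
    rcases hbip.2 hadj with ⟨_, h⟩ | ⟨h, _⟩
    · exact hAnotB w hw h
    · exact hAnotB u hu h
  have hwA : ∀ u w : V, u ∈ B → G.Adj u w → w ∈ A := by
    intro u w hu hadj
    rcases hbip.2 hadj with ⟨h, _⟩ | ⟨_, h⟩
    · exact absurd hu (hAnotB u h)
    · exact h
  rw [isLegalSeq_iff] at hla hlb ⊢
  obtain ⟨ha1, ha2⟩ := hla
  obtain ⟨hb1, hb2⟩ := hlb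
  constructor
  · rw [List.nodup_append]
    exact ⟨ha1, hb1, fun x hx y hy hxy => by subst hxy; exact hAnotB x (haA x hx) (hbB x hy)⟩
  · intro i hi hpos
    rcases lt_or_ge i la.length with hil | hil
    · obtain ⟨w, hw1, hw2⟩ := ha2 i hil hpos
      refine ⟨w, by rwa [List.getElem_append_left hil], fun j hj hji => ?_⟩
      have hjl : j < la.length := lt_trans hji hil
      rw [List.getElem_append_left hjl]
      exact hw2 j hjl hji
    · have hi' : i - la.length < lb.length := by
        simp only [List.length_append] at hi; omega
      have hix : (la ++ lb)[i] = lb[i - la.length] := List.getElem_append_right hil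
      have hxB : lb[i - la.length] ∈ B := hbB _ (lb.getElem_mem hi')
      have hprevA : ∀ j : ℕ, (hj : j < la.length) →
          ∀ w ∈ A, ¬ G.Adj ((la ++ lb)[j]'(by simp; omega)) w := by
        intro j hj w hw
        rw [List.getElem_append_left hj]
        exact hAA _ w (haA _ (la.getElem_mem hj)) hw
      rcases Nat.eq_zero_or_pos (i - la.length) with h0 | h0
      · obtain ⟨w, hw⟩ := hne _ (lb.getElem_mem hi')
        have hwA' : w ∈ A := hwA _ w hxB hw
        refine ⟨w, by rwa [hix], fun j hj hji => ?_⟩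
        have hjl : j < la.length := by omega
        exact hprevA j hjl w hwA'
      · obtain ⟨w, hw1, hw2⟩ := hb2 (i - la.length) hi' h0
        have hwA' : w ∈ A := hwA _ w hxB hw1
        refine ⟨w, by rwa [hix], fun j hj hji => ?_⟩
        rcases lt_or_ge j la.length with hjl | hjl
        · exact hprevA j hjl w hwA'
        · have hj' : j - la.length < lb.length := by
            simp only [List.length_append] at hj; omega
          rw [List.getElem_append_right hjl]
          exact hw2 (j - la.length) hj' (by omega)


/-- For `k ≥ 2`, if an `(n−k)`-regular bipartite false twin-free
graph on `2n` vertices with `γ_t = γ_gr^t = 6` exists, then an orthogonal array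
`OA(k, k − 1)` exists. -/
theorem orthogonal_array_of_regular_bipartite_six (n k : ℕ) (hk : 2 ≤ k)
    (h : ∃ (V : Type) (_ : Fintype V) (G : SimpleGraph V) (A B : Set V),
        Fintype.card V = 2 * n ∧ IsBipartitionOf G A B ∧ FalseTwinFree G ∧
        (∀ v : V, (G.neighborSet v).ncard = n - k) ∧
        totalDomNum G = 6 ∧ grundyTotalDomNum G = 6) :
    ∃ A : Fin ((k - 1) ^ 2) → Fin k → Fin (k - 1), IsOrthogonalArray A := by

  classical
  obtain ⟨V, instV, G, A, B, hcard, hbip, hftf, hreg, htd, hgr⟩ := h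
  rw [totalDomNum] at htd
  rw [grundyTotalDomNum] at hgr
  -- existence of a minimum total dominating set
  have hTDne : {m : ℕ | ∃ S : Set V, IsTotalDomSet G S ∧ S.ncard = m}.Nonempty := by
    by_contra h'
    rw [Set.not_nonempty_iff_eq_empty] at h'
    rw [h', Nat.sInf_empty] at htd
    exact absurd htd (by norm_num)
  have h6mem := Nat.sInf_mem hTDne
  rw [htd] at h6mem
  obtain ⟨S0, hS0, hS0card⟩ := h6mem
  have hmin : ∀ S : Set V, IsTotalDomSet G S → 6 ≤ S.ncard := by
    intro S hS
    have hmem : S.ncard ∈ {m : ℕ | ∃ S : Set V, IsTotalDomSet G S ∧ S.ncard = m} :=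
      ⟨S, hS, rfl⟩
    have := Nat.sInf_le hmem
    omega
  have hgrle : ∀ l : List V, IsTotalDomSeq G l → l.length ≤ 6 := by
    intro l hl
    have hbdd : BddAbove {m : ℕ | ∃ l : List V, IsTotalDomSeq G l ∧ l.length = m} := by
      refine ⟨Fintype.card V, ?_⟩
      rintro m ⟨l', hl', rfl⟩
      exact hl'.1.1.length_le_card
    have := le_csSup hbdd (⟨l, hl, rfl⟩ :
      l.length ∈ {m : ℕ | ∃ l : List V, IsTotalDomSeq G l ∧ l.length = m})
    omega
  have hiso : ∀ v : V, ∃ u : V, G.Adj v u := by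
    intro v
    obtain ⟨u, _, hu⟩ := hS0 v
    exact ⟨u, hu⟩
  -- V is nonempty, k < n
  have hnk : k < n := by
    have hS0ne : S0.Nonempty := Set.nonempty_of_ncard_ne_zero (by omega)
    obtain ⟨v0, _⟩ := hS0ne
    obtain ⟨u0, hu0⟩ := hiso v0
    have h1 : (G.neighborSet v0).Nonempty := ⟨u0, hu0⟩
    have h2 := hreg v0
    have h3 : 0 < (G.neighborSet v0).ncard := (Set.ncard_pos (Set.toFinite _)).mpr h1
    omega
  have hbipswap : IsBipartitionOf G B A :=
    ⟨fun v => (hbip.1 v).symm, fun u v h => (hbip.2 h).symm⟩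
  have hnotmem : ∀ (X Y : Set V), IsBipartitionOf G X Y → ∀ u ∈ X, u ∉ Y := by
    intro X Y hXY u hu
    rcases hXY.1 u with ⟨_, h⟩ | ⟨_, h⟩
    · exact h
    · exact absurd hu h
  have hNsub : ∀ (X Y : Set V), IsBipartitionOf G X Y → ∀ x ∈ X, G.neighborSet x ⊆ Y := by
    intro X Y hXY x hx w hw
    rcases hXY.2 hw with ⟨_, h⟩ | ⟨h, _⟩
    · exact h
    · exact absurd hx (hnotmem Y X ⟨fun v => (hXY.1 v).symm, fun u v h' => (hXY.2 h').symm⟩ x h)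
  -- cardinalities of the sides
  have hsumcard : A.ncard + B.ncard = 2 * n := by
    have hdisj : Disjoint A B := Set.disjoint_left.mpr (hnotmem A B hbip)
    have hunion : A ∪ B = Set.univ := by
      ext v
      rcases hbip.1 v with ⟨h, _⟩ | ⟨h, _⟩ <;> simp [h]
    have := Set.ncard_union_eq hdisj (Set.toFinite A) (Set.toFinite B)
    rw [hunion] at this
    rw [← this, Set.ncard_univ, Nat.card_eq_fintype_card, hcard]
  have hdeg : ∀ v : V, G.degree v = n - k := by
    intro v
    have h1 : G.degree v = (G.neighborSet v).ncard := by
      rw [Set.ncard_eq_toFinset_card']; rfl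
    rw [h1, hreg]
  have hcardAB : A.ncard = n ∧ B.ncard = n := by
    have hedge : ∀ (X Y : Set V), IsBipartitionOf G X Y →
        (Finset.univ.filter (fun p : V × V => p.1 ∈ X ∧ G.Adj p.1 p.2)).card
          = X.toFinset.card * (n - k) := by
      intro X Y hXY
      rw [Finset.card_filter, ← Finset.univ_product_univ, Finset.sum_product]
      have hinner : ∀ a : V, (∑ b : V, if a ∈ X ∧ G.Adj a b then 1 else 0)
          = if a ∈ X.toFinset then G.degree a else 0 := by
        intro a
        by_cases ha : a ∈ X
        · simp only [ha, true_and, Set.mem_toFinset, if_true]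
          rw [Finset.sum_boole]
          norm_cast
          rw [← SimpleGraph.neighborFinset_eq_filter]
          rfl
        · simp [ha, Set.mem_toFinset]
      rw [Finset.sum_congr rfl (fun a _ => hinner a), Finset.sum_ite_mem,
        Finset.univ_inter, Finset.sum_congr rfl (fun a _ => hdeg a),
        Finset.sum_const, smul_eq_mul]
    have hswap : (Finset.univ.filter (fun p : V × V => p.1 ∈ A ∧ G.Adj p.1 p.2)).card
        = (Finset.univ.filter (fun p : V × V => p.1 ∈ B ∧ G.Adj p.1 p.2)).card := by
      apply Finset.card_bij' (fun p _ => Prod.swap p) (fun p _ => Prod.swap p)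
      · rintro ⟨u, v⟩ hp
        simp only [Finset.mem_filter, Finset.mem_univ, true_and] at hp ⊢
        exact ⟨hNsub A B hbip u hp.1 hp.2, hp.2.symm⟩
      · rintro ⟨u, v⟩ hp
        simp only [Finset.mem_filter, Finset.mem_univ, true_and] at hp ⊢
        exact ⟨hNsub B A hbipswap u hp.1 hp.2, hp.2.symm⟩
      · rintro ⟨u, v⟩ _; rfl
      · rintro ⟨u, v⟩ _; rfl
    have heq : A.toFinset.card * (n - k) = B.toFinset.card * (n - k) := by
      rw [← hedge A B hbip, ← hedge B A hbipswap, hswap]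
    have hcancel : A.toFinset.card = B.toFinset.card :=
      Nat.eq_of_mul_eq_mul_right (by omega) heq
    rw [Set.ncard_eq_toFinset_card' A, Set.ncard_eq_toFinset_card' B] at hsumcard ⊢
    omega
  obtain ⟨hcardA, hcardB⟩ := hcardAB
  have hblockcard : ∀ (X Y : Set V), IsBipartitionOf G X Y → Y.ncard = n →
      ∀ x ∈ X, (Y \ G.neighborSet x).ncard = k := by
    intro X Y hXY hY x hx
    rw [Set.ncard_diff (hNsub X Y hXY x hx) (Set.toFinite _), hY, hreg]
    omega
  have hdiffne : ∀ s t : Set V, s.ncard = t.ncard → s ≠ t → (s \ t).Nonempty := by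
    intro s t hcardst hne
    rw [Set.nonempty_iff_ne_empty]
    intro hdiff
    have hsub : s ⊆ t := by rwa [Set.diff_eq_empty] at hdiff
    exact hne (Set.eq_of_subset_of_ncard_le hsub (le_of_eq hcardst.symm) (Set.toFinite t))
  have hNne : ∀ x x' : V, x ≠ x' → (G.neighborSet x' \ G.neighborSet x).Nonempty := by
    intro x x' hne
    exact hdiffne _ _ (by rw [hreg, hreg]) (fun hEq => hftf x' x (Ne.symm hne) hEq)
  have hleg3 : ∀ (X Y : Set V), IsBipartitionOf G X Y → X.ncard = n → Y.ncard = n →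
      ∃ l : List V, IsLegalSeq G l ∧ (∀ v ∈ l, v ∈ X) ∧ l.length = 3 := by
    intro X Y hXY hX hY
    have hswapXY : IsBipartitionOf G Y X :=
      ⟨fun v => (hXY.1 v).symm, fun u v h => (hXY.2 h).symm⟩
    obtain ⟨y1, hy1⟩ : Y.Nonempty := Set.nonempty_of_ncard_ne_zero (by omega)
    have hXy1 : (X \ G.neighborSet y1).ncard = k := hblockcard Y X hswapXY hX y1 hy1
    obtain ⟨x1, x2, hx1, hx2, hx12⟩ :
        ∃ a b, a ∈ X \ G.neighborSet y1 ∧ b ∈ X \ G.neighborSet y1 ∧ a ≠ b := by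
      rw [← Set.one_lt_ncard_iff (Set.toFinite _)]
      omega
    obtain ⟨x3, hx3⟩ : (G.neighborSet y1).Nonempty :=
      Set.nonempty_of_ncard_ne_zero (by rw [hreg]; omega)
    have hx3X : x3 ∈ X := hNsub Y X hswapXY y1 hy1 hx3
    have hadj3 : G.Adj x3 y1 := (G.mem_neighborSet y1 x3).mp hx3 |>.symm
    have h31 : x3 ≠ x1 := fun h => hx1.2 (h ▸ hx3)
    have h32 : x3 ≠ x2 := fun h => hx2.2 (h ▸ hx3)
    refine ⟨[x1, x2, x3], ?_, ?_, rfl⟩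
    · rw [isLegalSeq_iff]
      constructor
      · simp [hx12, h31.symm, h32.symm]
      · intro i hi hpos
        simp only [List.length_cons, List.length_nil] at hi
        interval_cases i
        · obtain ⟨w, hw⟩ := hNne x1 x2 hx12
          refine ⟨w, by simpa using hw.1, ?_⟩
          intro j hj hj1
          have hj0 : j = 0 := by omega
          subst hj0
          simpa using hw.2
        · refine ⟨y1, by simpa using hadj3, ?_⟩
          intro j hj hj2
          interval_cases j
          · simpa using fun h : G.Adj x1 y1 => hx1.2 h.symm
          · simpa using fun h : G.Adj x2 y1 => hx2.2 h.symm
    · intro v hv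
      simp only [List.mem_cons, List.not_mem_nil, or_false] at hv
      rcases hv with rfl | rfl | rfl
      exacts [hx1.1, hx2.1, hx3X]
  have hnoleg4 : ∀ (X Y : Set V), IsBipartitionOf G X Y → X.ncard = n → Y.ncard = n →
      ∀ l : List V, IsLegalSeq G l → (∀ v ∈ l, v ∈ X) → l.length ≤ 3 := by
    intro X Y hXY hX hY l hl hlX
    by_contra hlen
    push_neg at hlen
    have hswapXY : IsBipartitionOf G Y X :=
      ⟨fun v => (hXY.1 v).symm, fun u v h => (hXY.2 h).symm⟩
    obtain ⟨lb, hlb, hlbY, hlb3⟩ := hleg3 Y X hswapXY hY hX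
    have hla := isLegalSeq_take (G := G) 4 hl
    have hlaX : ∀ v ∈ l.take 4, v ∈ X := fun v hv => hlX v (List.mem_of_mem_take hv)
    have hcomb := isLegalSeq_append hXY hla hlb hlaX hlbY (fun x _ => hiso x)
    obtain ⟨l', hl'1, _, hl'3, hl'4⟩ := legal_greedy G Set.univ Set.univ _ hcomb
      (fun _ _ => Set.mem_univ _)
      (fun v _ => by obtain ⟨u, hu⟩ := hiso v; exact ⟨u, Set.mem_univ u, hu⟩)
    have hle6 : l'.length ≤ 6 := hgrle l' ⟨hl'1, fun v => by
      obtain ⟨u, hu1, hu2⟩ := hl'3 v (Set.mem_univ v)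
      exact ⟨u, hu1, hu2⟩⟩
    have h7 : (l.take 4 ++ lb).length = 7 := by
      simp only [List.length_append, List.length_take, hlb3]
      omega
    omega
  have hgreedycover : ∀ (X Y : Set V), IsBipartitionOf G X Y → X.ncard = n → Y.ncard = n →
      ∃ l : List V, IsLegalSeq G l ∧ (∀ v ∈ l, v ∈ Y) ∧
        (∀ x ∈ X, ∃ u ∈ l, G.Adj x u) ∧ l.length ≤ 3 := by
    intro X Y hXY hX hY
    have hswapXY : IsBipartitionOf G Y X :=
      ⟨fun v => (hXY.1 v).symm, fun u v h => (hXY.2 h).symm⟩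
    have hempty : IsLegalSeq G ([] : List V) :=
      ⟨List.nodup_nil, fun i _ => absurd i.isLt (by simp)⟩
    obtain ⟨l, h1, h2, h3, _⟩ := legal_greedy G Y X [] hempty (by simp) (fun v hv => by
      obtain ⟨u, hu⟩ := hiso v
      exact ⟨u, hNsub X Y hXY v hv hu, hu⟩)
    exact ⟨l, h1, h2, h3, hnoleg4 Y X hswapXY hY hX l h1 h2⟩
  have hpairne : ∀ (X Y : Set V), IsBipartitionOf G X Y → X.ncard = n → Y.ncard = n →
      ∀ x ∈ X, ∀ x' ∈ X, ((Y \ G.neighborSet x) ∩ (Y \ G.neighborSet x')).Nonempty := by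
    intro X Y hXY hX hY x hx x' hx'
    rw [Set.nonempty_iff_ne_empty]
    intro hemp
    obtain ⟨lb, hlb1, hlb2, hlb3, hlb4⟩ := hgreedycover X Y hXY hX hY
    have hTDS : IsTotalDomSet G (insert x (insert x' {v | v ∈ lb})) := by
      intro v
      rcases hXY.1 v with ⟨hv, _⟩ | ⟨hv, _⟩
      · obtain ⟨u, hu1, hu2⟩ := hlb3 v hv
        exact ⟨u, by simp [hu1], hu2⟩
      · have hnin : v ∉ (Y \ G.neighborSet x) ∩ (Y \ G.neighborSet x') := by
          rw [hemp]; exact id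
        have hv2 : v ∈ G.neighborSet x ∨ v ∈ G.neighborSet x' := by
          by_contra hcon
          push_neg at hcon
          exact hnin ⟨⟨hv, hcon.1⟩, ⟨hv, hcon.2⟩⟩
        rcases hv2 with hvn | hvn
        · exact ⟨x, by simp, hvn.symm⟩
        · exact ⟨x', by simp, hvn.symm⟩
    have hcard5 : (insert x (insert x' {v | v ∈ lb}) : Set V).ncard ≤ 5 := by
      have h1 : ({v | v ∈ lb} : Set V).ncard ≤ 3 := by
        have e1 : ({v | v ∈ lb} : Set V) = ↑lb.toFinset := by ext v; simp
        rw [e1, Set.ncard_coe_finset]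
        exact le_trans lb.toFinset_card_le hlb4
      have h2 := Set.ncard_insert_le x' ({v | v ∈ lb} : Set V)
      have h3 := Set.ncard_insert_le x (insert x' ({v | v ∈ lb} : Set V))
      omega
    have := hmin _ hTDS
    omega
  have honept : ∀ (X Y : Set V), IsBipartitionOf G X Y → X.ncard = n → Y.ncard = n →
      ∀ x ∈ X, ∀ x' ∈ X, x ≠ x' →
      ∃ z : V, (Y \ G.neighborSet x) ∩ (Y \ G.neighborSet x') = {z} := by
    intro X Y hXY hX hY x hx x' hx' hne
    obtain ⟨z0, hz0⟩ := hpairne X Y hXY hX hY x hx x' hx'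
    have hclaim : ∀ u v : V, u ∈ (Y \ G.neighborSet x) ∩ (Y \ G.neighborSet x') →
        v ∈ (Y \ G.neighborSet x) ∩ (Y \ G.neighborSet x') →
        ∀ z ∈ X, G.Adj z u → G.Adj z v := by
      intro u v hu hv z hz hadj
      by_contra hnadj
      have hzx : z ≠ x := by
        intro hq
        exact hu.1.2 (by rw [SimpleGraph.mem_neighborSet, ← hq]; exact hadj)
      have hzx' : z ≠ x' := by
        intro hq
        exact hu.2.2 (by rw [SimpleGraph.mem_neighborSet, ← hq]; exact hadj)
      obtain ⟨x4, hx4⟩ := hiso v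
      have hvY : v ∈ Y := hv.1.1
      have hx4X : x4 ∈ X := by
        rcases hXY.2 hx4.symm with ⟨h1, _⟩ | ⟨_, h2⟩
        · exact h1
        · exact absurd hvY (hnotmem X Y hXY v h2)
      have h4x : x4 ≠ x := by
        intro hq
        exact hv.1.2 (by rw [SimpleGraph.mem_neighborSet, ← hq]; exact hx4.symm)
      have h4x' : x4 ≠ x' := by
        intro hq
        exact hv.2.2 (by rw [SimpleGraph.mem_neighborSet, ← hq]; exact hx4.symm)
      have h4z : x4 ≠ z := by
        intro hq
        exact hnadj (by rw [← hq]; exact hx4.symm)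
      obtain ⟨w2, hw2⟩ := hNne x x' hne
      have hlegal : IsLegalSeq G [x, x', z, x4] := by
        rw [isLegalSeq_iff]
        constructor
        · simp [hne, hzx.symm, hzx'.symm, h4x.symm, h4x'.symm, h4z.symm]
        · intro i hi hpos
          simp only [List.length_cons, List.length_nil] at hi
          interval_cases i
          · refine ⟨w2, by simpa using hw2.1, ?_⟩
            intro j hj hj1
            have hj0 : j = 0 := by omega
            subst hj0
            simpa using hw2.2
          · refine ⟨u, by simpa using hadj, ?_⟩
            intro j hj hj2
            interval_cases j
            · simpa using fun hq : G.Adj x u => hu.1.2 hq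
            · simpa using fun hq : G.Adj x' u => hu.2.2 hq
          · refine ⟨v, by simpa using hx4.symm, ?_⟩
            intro j hj hj3
            interval_cases j
            · simpa using fun hq : G.Adj x v => hv.1.2 hq
            · simpa using fun hq : G.Adj x' v => hv.2.2 hq
            · simpa using hnadj
      have hmemX : ∀ w ∈ [x, x', z, x4], w ∈ X := by
        intro w hw
        simp only [List.mem_cons, List.not_mem_nil, or_false] at hw
        rcases hw with rfl | rfl | rfl | rfl
        exacts [hx, hx', hz, hx4X]
      have := hnoleg4 X Y hXY hX hY _ hlegal hmemX
      simp at this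
    refine ⟨z0, Set.eq_singleton_iff_unique_mem.mpr ⟨hz0, fun w hw => ?_⟩⟩
    by_contra hwz
    apply hftf w z0 hwz
    have hwY : w ∈ Y := hw.1.1
    ext t
    simp only [SimpleGraph.mem_neighborSet]
    have htXof : ∀ s : V, s ∈ Y → G.Adj s t → t ∈ X := by
      intro s hs hst
      rcases hXY.2 hst with ⟨h1, _⟩ | ⟨_, h2⟩
      · exact absurd hs (hnotmem X Y hXY s h1)
      · exact h2
    constructor
    · intro ht
      exact (hclaim w z0 hw hz0 t (htXof w hwY ht) ht.symm).symm
    · intro ht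
      exact (hclaim z0 w hz0 hw t (htXof z0 hz0.1.1 ht) ht.symm).symm
  have hn : n = k * (k - 1) + 1 := by
    obtain ⟨b0, hb0⟩ : B.Nonempty := Set.nonempty_of_ncard_ne_zero (by omega)
    set F : Finset V := (A \ G.neighborSet b0).toFinset with hF
    have hFcard : F.card = k := by
      rw [hF, ← Set.ncard_eq_toFinset_card']
      exact hblockcard B A hbipswap hcardA b0 hb0
    have hmemF : ∀ a, a ∈ F ↔ a ∈ A ∧ a ∉ G.neighborSet b0 := by
      intro a; rw [hF, Set.mem_toFinset, Set.mem_diff]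
    have hb0M : ∀ a ∈ F, b0 ∈ (B \ G.neighborSet a) := by
      intro a ha
      refine ⟨hb0, fun hc => ?_⟩
      exact ((hmemF a).mp ha).2 (((G.mem_neighborSet a b0).mp hc).symm : G.Adj b0 a)
    set g : V → Finset V := fun a => ((B \ G.neighborSet a) \ {b0}).toFinset with hg
    have hgmem : ∀ a b : V, b ∈ g a ↔ (b ∈ B ∧ b ∉ G.neighborSet a) ∧ b ≠ b0 := by
      intro a b
      rw [hg]
      simp only [Set.mem_toFinset, Set.mem_diff, Set.mem_singleton_iff]
    have hgcard : ∀ a ∈ F, (g a).card = k - 1 := by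
      intro a ha
      rw [hg]
      simp only
      rw [← Set.ncard_eq_toFinset_card',
        Set.ncard_diff_singleton_of_mem (hb0M a ha),
        hblockcard A B hbip hcardB a ((hmemF a).mp ha).1]
    have hsingle : ∀ a ∈ F, ∀ a' ∈ F, a ≠ a' →
        (B \ G.neighborSet a) ∩ (B \ G.neighborSet a') = {b0} := by
      intro a ha a' ha' hanee
      obtain ⟨z, hz⟩ := honept A B hbip hcardA hcardB a ((hmemF a).mp ha).1 a'
        ((hmemF a').mp ha').1 hanee
      have hzb : b0 ∈ ({z} : Set V) := hz ▸ ⟨hb0M a ha, hb0M a' ha'⟩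
      rw [Set.mem_singleton_iff] at hzb
      rw [hz, hzb]
    have hdisjg : ∀ a ∈ F, ∀ a' ∈ F, a ≠ a' → Disjoint (g a) (g a') := by
      intro a ha a' ha' hanee
      rw [Finset.disjoint_left]
      intro b hb hb'
      rw [hgmem] at hb hb'
      have hbmem : b ∈ (B \ G.neighborSet a) ∩ (B \ G.neighborSet a') := ⟨hb.1, hb'.1⟩
      rw [hsingle a ha a' ha' hanee] at hbmem
      exact hb.2 hbmem
    have hcover : B.toFinset = insert b0 (F.biUnion g) := by
      ext b
      simp only [Set.mem_toFinset, Finset.mem_insert, Finset.mem_biUnion]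
      constructor
      · intro hbB
        by_cases hbb0 : b = b0
        · exact Or.inl hbb0
        · obtain ⟨z, hz⟩ := honept B A hbipswap hcardB hcardA b0 hb0 b hbB (Ne.symm hbb0)
          have hzmem : z ∈ (A \ G.neighborSet b0) ∩ (A \ G.neighborSet b) := by
            rw [hz]; exact rfl
          refine Or.inr ⟨z, (hmemF z).mpr hzmem.1, (hgmem z b).mpr ⟨⟨hbB, ?_⟩, hbb0⟩⟩
          intro hc
          exact hzmem.2.2 (((G.mem_neighborSet z b).mp hc).symm : G.Adj b z)
      · intro hyp
        rcases hyp with rfl | ⟨a, _, hbmem⟩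
        · exact hb0
        · exact ((hgmem a b).mp hbmem).1.1
    have hb0nin : b0 ∉ F.biUnion g := by
      simp only [Finset.mem_biUnion]
      rintro ⟨a, _, hbmem⟩
      exact ((hgmem a b0).mp hbmem).2 rfl
    have hbcard := congrArg Finset.card hcover
    rw [← Set.ncard_eq_toFinset_card', hcardB, Finset.card_insert_of_notMem hb0nin,
      Finset.card_biUnion hdisjg, Finset.sum_congr rfl hgcard, Finset.sum_const,
      smul_eq_mul, hFcard] at hbcard
    omega
  -- the construction of the orthogonal array
  obtain ⟨a0, ha0⟩ : A.Nonempty := Set.nonempty_of_ncard_ne_zero (by omega)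
  have hq2 : (k - 1) ^ 2 = k * (k - 1) + 1 - k := by
    obtain ⟨q, rfl⟩ : ∃ q, k = q + 1 := ⟨k - 1, by omega⟩
    simp only [Nat.add_sub_cancel]
    have h1 : (q + 1) * q = q * q + q := by ring
    have h2 : q ^ 2 = q * q := by rw [pow_two]
    omega
  have hLcard : (B \ G.neighborSet a0).ncard = k := hblockcard A B hbip hcardB a0 ha0
  have hRcard : (G.neighborSet a0).ncard = (k - 1) ^ 2 := by
    rw [hq2, ← hn, hreg]
  have hRB : G.neighborSet a0 ⊆ B := hNsub A B hbip a0 ha0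
  have ha0mem : ∀ e ∈ B \ G.neighborSet a0, a0 ∈ A \ G.neighborSet e := by
    intro e he
    exact ⟨ha0, fun hc => he.2 (((G.mem_neighborSet e a0).mp hc).symm : G.Adj a0 e)⟩
  have hSymcard : ∀ e ∈ B \ G.neighborSet a0, ((A \ G.neighborSet e) \ {a0}).ncard = k - 1 := by
    intro e he
    rw [Set.ncard_diff_singleton_of_mem (ha0mem e he),
      hblockcard B A hbipswap hcardA e he.1]
  have hfin : ∀ (s : Set V) (inst : Fintype ↥s) (m : ℕ), s.ncard = m →
      @Fintype.card ↥s inst = m := by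
    intro s inst m hm
    rw [← @Nat.card_eq_fintype_card _ inst, Nat.card_coe_set_eq, hm]
  obtain ⟨eR⟩ : Nonempty (Fin ((k - 1) ^ 2) ≃ ↥(G.neighborSet a0)) :=
    ⟨(Fintype.equivFinOfCardEq (hfin _ _ _ hRcard)).symm⟩
  obtain ⟨eC⟩ : Nonempty (Fin k ≃ ↥(B \ G.neighborSet a0)) :=
    ⟨(Fintype.equivFinOfCardEq (hfin _ _ _ hLcard)).symm⟩
  obtain ⟨eS⟩ : Nonempty (∀ j : Fin k,
      ↥((A \ G.neighborSet ((eC j : V))) \ {a0}) ≃ Fin (k - 1)) :=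
    ⟨fun j => Fintype.equivFinOfCardEq (hfin _ _ _ (hSymcard _ (eC j).2))⟩
  have hblkex : ∀ p e : V, ∃ a : V, p ∈ B → e ∈ B → p ≠ e →
      (A \ G.neighborSet p) ∩ (A \ G.neighborSet e) = {a} := by
    intro p e
    by_cases hc : p ∈ B ∧ e ∈ B ∧ p ≠ e
    · obtain ⟨z, hz⟩ := honept B A hbipswap hcardB hcardA p hc.1 e hc.2.1 hc.2.2
      exact ⟨z, fun _ _ _ => hz⟩
    · exact ⟨a0, fun h1 h2 h3 => absurd ⟨h1, h2, h3⟩ hc⟩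
  choose blk hblk using hblkex
  have hRL : ∀ p ∈ G.neighborSet a0, ∀ e ∈ B \ G.neighborSet a0, p ≠ e := by
    intro p hp e he hpe
    exact he.2 (hpe ▸ hp)
  have hblkmem : ∀ p ∈ G.neighborSet a0, ∀ e ∈ B \ G.neighborSet a0,
      blk p e ∈ (A \ G.neighborSet p) ∩ (A \ G.neighborSet e) := by
    intro p hp e he
    rw [hblk p e (hRB hp) he.1 (hRL p hp e he)]
    exact rfl
  have hblkuniq : ∀ p ∈ G.neighborSet a0, ∀ e ∈ B \ G.neighborSet a0, ∀ a : V,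
      a ∈ (A \ G.neighborSet p) ∩ (A \ G.neighborSet e) → a = blk p e := by
    intro p hp e he a ha
    have := hblk p e (hRB hp) he.1 (hRL p hp e he)
    rw [this] at ha
    exact ha
  have hblkS : ∀ (r : Fin ((k - 1) ^ 2)) (j : Fin k),
      blk ((eR r : V)) ((eC j : V)) ∈ (A \ G.neighborSet ((eC j : V))) \ {a0} := by
    intro r j
    have h1 := hblkmem _ (eR r).2 _ (eC j).2
    refine ⟨h1.2, fun hc => ?_⟩
    rw [Set.mem_singleton_iff] at hc
    have h2 := h1.1
    rw [hc] at h2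
    exact h2.2 ((G.mem_neighborSet (eR r : V) a0).mpr ((eR r).2 : G.Adj a0 (eR r : V)).symm)
  refine ⟨fun r j => eS j ⟨blk ((eR r : V)) ((eC j : V)), hblkS r j⟩, ?_⟩
  intro j1 j2 hj x y
  have hval : ∀ (r : Fin ((k - 1) ^ 2)) (j : Fin k) (xx : Fin (k - 1)),
      (eS j) ⟨blk ((eR r : V)) ((eC j : V)), hblkS r j⟩ = xx ↔
        blk ((eR r : V)) ((eC j : V)) = ((eS j).symm xx : V) := by
    intro r j xx
    rw [Equiv.apply_eq_iff_eq_symm_apply, Subtype.ext_iff]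
  have he12 : (eC j1 : V) ≠ (eC j2 : V) := fun hc => hj (eC.injective (Subtype.ext hc))
  have ha1 := ((eS j1).symm x).2
  have ha2 := ((eS j2).symm y).2
  have ha1A : ((eS j1).symm x : V) ∈ A := ha1.1.1
  have ha2A : ((eS j2).symm y : V) ∈ A := ha2.1.1
  have ha1ne0 : ((eS j1).symm x : V) ≠ a0 := ha1.2
  have ha2ne0 : ((eS j2).symm y : V) ≠ a0 := ha2.2
  have hei : ∀ (j : Fin k) (a : V), a ∈ (A \ G.neighborSet ((eC j : V))) \ {a0} →
      (eC j : V) ∈ B \ G.neighborSet a := by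
    intro j a ha
    refine ⟨(eC j).2.1, fun hc => ?_⟩
    exact ha.1.2 (((G.mem_neighborSet a (eC j : V)).mp hc).symm : G.Adj (eC j : V) a)
  have ha12 : ((eS j1).symm x : V) ≠ ((eS j2).symm y : V) := by
    intro hc
    obtain ⟨z, hz⟩ := honept B A hbipswap hcardB hcardA ((eC j1 : V)) (eC j1).2.1
      ((eC j2 : V)) (eC j2).2.1 he12
    have hz0 : a0 ∈ (A \ G.neighborSet ((eC j1 : V))) ∩ (A \ G.neighborSet ((eC j2 : V))) :=
      ⟨ha0mem _ (eC j1).2, ha0mem _ (eC j2).2⟩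
    have hz1 : ((eS j1).symm x : V) ∈
        (A \ G.neighborSet ((eC j1 : V))) ∩ (A \ G.neighborSet ((eC j2 : V))) :=
      ⟨ha1.1, hc ▸ ha2.1⟩
    rw [hz, Set.mem_singleton_iff] at hz0 hz1
    exact ha1ne0 (hz1.trans hz0.symm)
  obtain ⟨x0, hx0⟩ := honept A B hbip hcardA hcardB _ ha1A _ ha2A ha12
  have hx0mem : x0 ∈ (B \ G.neighborSet ((eS j1).symm x : V)) ∩
      (B \ G.neighborSet ((eS j2).symm y : V)) := by
    rw [hx0]; exact rfl
  have hx0R : x0 ∈ G.neighborSet a0 := by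
    by_contra hc
    have hx0L : x0 ∈ B \ G.neighborSet a0 := ⟨hx0mem.1.1, hc⟩
    have hx0e : ∀ (j : Fin k) (a : V), a ∈ (A \ G.neighborSet ((eC j : V))) \ {a0} →
        x0 ∈ B \ G.neighborSet a → x0 = (eC j : V) := by
      intro j a ha hx0a
      have hnea : a0 ≠ a := fun h => ha.2 (h ▸ rfl)
      obtain ⟨z, hz⟩ := honept A B hbip hcardA hcardB a0 ha0 a ha.1.1 hnea
      have m1 : (eC j : V) ∈ (B \ G.neighborSet a0) ∩ (B \ G.neighborSet a) :=
        ⟨(eC j).2, hei j a ha⟩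
      have m2 : x0 ∈ (B \ G.neighborSet a0) ∩ (B \ G.neighborSet a) := ⟨hx0L, hx0a⟩
      rw [hz, Set.mem_singleton_iff] at m1 m2
      exact m2.trans m1.symm
    have e1 := hx0e j1 _ ha1 hx0mem.1
    have e2 := hx0e j2 _ ha2 hx0mem.2
    exact he12 (e1 ▸ e2)
  refine ⟨eR.symm ⟨x0, hx0R⟩, ⟨?_, ?_⟩, ?_⟩
  · rw [hval]
    have hsimp : ((eR (eR.symm ⟨x0, hx0R⟩)) : V) = x0 :=
      congrArg Subtype.val (eR.apply_symm_apply ⟨x0, hx0R⟩)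
    rw [hsimp]
    refine (hblkuniq x0 hx0R _ (eC j1).2 _ ⟨⟨ha1A, fun hcc => ?_⟩, ha1.1⟩).symm
    exact hx0mem.1.2 (((G.mem_neighborSet x0 _).mp hcc).symm : G.Adj ((eS j1).symm x : V) x0)
  · rw [hval]
    have hsimp : ((eR (eR.symm ⟨x0, hx0R⟩)) : V) = x0 :=
      congrArg Subtype.val (eR.apply_symm_apply ⟨x0, hx0R⟩)
    rw [hsimp]
    refine (hblkuniq x0 hx0R _ (eC j2).2 _ ⟨⟨ha2A, fun hcc => ?_⟩, ha2.1⟩).symm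
    exact hx0mem.2.2 (((G.mem_neighborSet x0 _).mp hcc).symm : G.Adj ((eS j2).symm y : V) x0)
  · rintro r' ⟨hr1, hr2⟩
    rw [hval] at hr1 hr2
    have hm1 := hblkmem _ (eR r').2 _ (eC j1).2
    have hm2 := hblkmem _ (eR r').2 _ (eC j2).2
    rw [hr1] at hm1
    rw [hr2] at hm2
    have hp1 : (eR r' : V) ∈ B \ G.neighborSet ((eS j1).symm x : V) :=
      ⟨hRB (eR r').2, fun hcc => hm1.1.2 (((G.mem_neighborSet _ _).mp hcc).symm)⟩
    have hp2 : (eR r' : V) ∈ B \ G.neighborSet ((eS j2).symm y : V) :=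
      ⟨hRB (eR r').2, fun hcc => hm2.1.2 (((G.mem_neighborSet _ _).mp hcc).symm)⟩
    have : (eR r' : V) ∈ ({x0} : Set V) := by
      rw [← hx0]; exact ⟨hp1, hp2⟩
    rw [Set.mem_singleton_iff] at this
    have : eR r' = ⟨x0, hx0R⟩ := Subtype.ext this
    calc r' = eR.symm (eR r') := (eR.symm_apply_apply r').symm
      _ = eR.symm ⟨x0, hx0R⟩ := by rw [this]
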